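/- Let n ≥ 2, g ≥ 2, let C be either a block in [n] × [n] or the empty set, and for each 1 ≤ l ≤ 2g let D_l ⊆ [n] × [n] be a (possibly empty) union of blocks, with D̄_l = {(j,i) : (i,j) ∈ D_l}. Suppose M₁, …, M_{2g} ∈ SO(2n+1) satisfy, for each l and all 1 ≤ i, j ≤ n: if (i,j) ∈ D_l then the (i,j)-th 2×2 block of M_l is the zero matrix; if (i,j) ∉ D_l ∪ D̄_l and (i,j) ∈ C ∪ C̄ then (M_l)_{2i−1,2j−1} = −(M_l)_{2i,2j} and (M_l)_{2i,2j−1} = (M_l)_{2i−1,2j}; and if (i,j) ∉ D_l ∪ D̄_l and (i,j) ∉ C ∪ C̄ then (M_l)_{2i−1,2j−1} = (M_l)_{2i,2j} and (M_l)_{2i,2j−1} = −(M_l)_{2i−1,2j}. Then the product of commutators ∏_{l=1}^{g} [M_l, M_{g+l}] is not a generic element of T. -/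

import Mathlib

open Matrix Real

/-- Index `2i` (0-based; row `2i-1` in 1-based numbering) in `Fin (2n+1)`. -/
def ia {n : ℕ} (i : Fin n) : Fin (2*n+1) := ⟨2*i.val, by have := i.isLt; omega⟩

/-- Index `2i+1` (0-based; row `2i` in 1-based numbering) in `Fin (2n+1)`. -/
def ib {n : ℕ} (i : Fin n) : Fin (2*n+1) := ⟨2*i.val+1, by have := i.isLt; omega⟩

/-- The last index `2n` in `Fin (2n+1)`. -/
def ilast (n : ℕ) : Fin (2*n+1) := ⟨2*n, by omega⟩

/-- Membership in SO(2n+1). -/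
def SOodd (n : ℕ) (M : Matrix (Fin (2*n+1)) (Fin (2*n+1)) ℝ) : Prop :=
  M * Mᵀ = 1 ∧ M.det = 1

/-- The block-diagonal torus element `diag(R(θ₁), …, R(θₙ), 1)` of SO(2n+1). -/
noncomputable def torusMat (n : ℕ) (θ : Fin n → ℝ) :
    Matrix (Fin (2*n+1)) (Fin (2*n+1)) ℝ :=
  Matrix.of fun r c =>
    if hr : r.val < 2*n then
      if c.val < 2*n then
        if r.val / 2 = c.val / 2 then
          if r.val % 2 = 0 then
            if c.val % 2 = 0 then Real.cos (θ ⟨r.val/2, by omega⟩)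
            else -Real.sin (θ ⟨r.val/2, by omega⟩)
          else
            if c.val % 2 = 0 then Real.sin (θ ⟨r.val/2, by omega⟩)
            else Real.cos (θ ⟨r.val/2, by omega⟩)
        else 0
      else 0
    else if c.val < 2*n then 0 else 1

/-- `(θ₁, …, θₙ)` is a generic torus element: its centralizer in SO(2n+1) is exactly
the torus, and the only `λ ∈ {-1,0,1}ⁿ` with `λ·θ ∈ 2πℤ` is `λ = 0`. -/
noncomputable def IsGeneric (n : ℕ) (θ : Fin n → ℝ) : Prop :=
  (∀ M, SOodd n M → M * torusMat n θ = torusMat n θ * M →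
      ∃ φ : Fin n → ℝ, M = torusMat n φ) ∧
  (∀ lam : Fin n → ℤ, (∀ i, lam i = -1 ∨ lam i = 0 ∨ lam i = 1) →
      (∃ k : ℤ, ∑ i, (lam i : ℝ) * θ i = 2 * Real.pi * k) → ∀ i, lam i = 0)

/-- Commutator of matrices: `[P,Q] = P Q P⁻¹ Q⁻¹`. -/
noncomputable def commMat (n : ℕ) (P Q : Matrix (Fin (2*n+1)) (Fin (2*n+1)) ℝ) :
    Matrix (Fin (2*n+1)) (Fin (2*n+1)) ℝ :=
  P * Q * P⁻¹ * Q⁻¹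

/-- A block in [n] × [n]: a set of the form V × Vᶜ with ∅ ⊊ V ⊊ [n]. -/
def IsBlockFin (n : ℕ) (B : Finset (Fin n × Fin n)) : Prop :=
  ∃ V : Finset (Fin n), V.Nonempty ∧ V ≠ Finset.univ ∧ B = V ×ˢ Vᶜ

/-- A (possibly empty) union of blocks in [n] × [n]. -/
def IsUnionOfBlocksFin (n : ℕ) (D : Finset (Fin n × Fin n)) : Prop :=
  ∃ S : Finset (Finset (Fin n × Fin n)), (∀ b ∈ S, IsBlockFin n b) ∧ D = S.sup id

def pr {n : ℕ} (i : Fin n) (s : Bool) : Fin (2*n+1) := if s then ib i else ia i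

namespace St6
variable {n : ℕ}

lemma pr_false (i : Fin n) : pr i false = ia i := rfl
lemma pr_true (i : Fin n) : pr i true = ib i := rfl

lemma pr_lt (i : Fin n) (s : Bool) : (pr i s).val < 2*n := by
  have := i.isLt; cases s <;> simp [pr, ia, ib] <;> omega

lemma pr_ne_ilast (i : Fin n) (s : Bool) : pr i s ≠ ilast n := by
  have := pr_lt i s
  intro h; rw [h] at this; simp [ilast] at this

lemma pr_inj {i j : Fin n} {s t : Bool} (h : pr i s = pr j t) : i = j ∧ s = t := by
  have := Fin.val_eq_of_eq h
  cases s <;> cases t <;> simp [pr, ia, ib] at this <;>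
    first
    | exact ⟨Fin.ext (by omega), rfl⟩
    | omega

lemma pr_eq_iff {i j : Fin n} {s t : Bool} : pr i s = pr j t ↔ (i = j ∧ s = t) := by
  constructor
  · exact pr_inj
  · rintro ⟨rfl, rfl⟩; rfl

lemma sum_nat_pair (h : ℕ → ℝ) (m : ℕ) :
    ∑ k ∈ Finset.range (2*m), h k = ∑ i ∈ Finset.range m, (h (2*i) + h (2*i+1)) := by
  induction m with
  | zero => simp
  | succ m ih =>
      have h2 : 2*(m+1) = (2*m+1)+1 := by ring
      rw [Finset.sum_range_succ, ← ih, h2, Finset.sum_range_succ, Finset.sum_range_succ]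
      ring

lemma sum_split (g : Fin (2*n+1) → ℝ) :
    ∑ x, g x = (∑ i : Fin n, ∑ s : Bool, g (pr i s)) + g (ilast n) := by
  classical
  set h : ℕ → ℝ := fun k => if hk : k < 2*n+1 then g ⟨k, hk⟩ else 0 with hh
  have h1 : ∑ x, g x = ∑ k ∈ Finset.range (2*n+1), h k := by
    rw [Finset.sum_range fun k => h k]
    apply Finset.sum_congr rfl
    intro x _
    simp only [hh]
    rw [dif_pos x.isLt]
  rw [h1, Finset.sum_range_succ, sum_nat_pair]
  congr 1
  · rw [Finset.sum_range fun i => h (2*i) + h (2*i+1)]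
    apply Finset.sum_congr rfl
    intro i _
    have e1 : h (2*i.val) = g (pr i false) := by
      simp only [hh]; rw [dif_pos (by have := i.isLt; omega)]
      congr 1
    have e2 : h (2*i.val+1) = g (pr i true) := by
      simp only [hh]; rw [dif_pos (by have := i.isLt; omega)]
      congr 1
    rw [e1, e2]
    rw [Fintype.sum_bool]
    ring
  · simp only [hh]; rw [dif_pos (by omega)]; congr 1

variable (M : Matrix (Fin (2*n+1)) (Fin (2*n+1)) ℝ)

lemma gram_row (hMM : M * Mᵀ = 1) (r r' : Fin (2*n+1)) :
    (∑ i : Fin n, ∑ s : Bool, M r (pr i s) * M r' (pr i s))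
      + M r (ilast n) * M r' (ilast n) = if r = r' then 1 else 0 := by
  have h := congrFun (congrFun hMM r) r'
  rw [Matrix.mul_apply] at h
  simp only [Matrix.transpose_apply, Matrix.one_apply] at h
  rw [← sum_split (fun x => M r x * M r' x)]
  exact h

lemma gram_col (hMM : Mᵀ * M = 1) (c c' : Fin (2*n+1)) :
    (∑ i : Fin n, ∑ s : Bool, M (pr i s) c * M (pr i s) c')
      + M (ilast n) c * M (ilast n) c' = if c = c' then 1 else 0 := by
  have h := congrFun (congrFun hMM c) c'
  rw [Matrix.mul_apply] at h
  simp only [Matrix.transpose_apply, Matrix.one_apply] at h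
  rw [← sum_split (fun x => M x c * M x c')]
  exact h

variable (f : Fin n → Finset (Finset (Fin n × Fin n)))

/-- columns of pair `i` are resolved -/
def ColRes (i : Fin n) : Prop :=
  (∀ j s t, f j ≠ f i → M (pr j s) (pr i t) = 0) ∧
  (∀ t, M (ilast n) (pr i t) = 0) ∧
  (∀ s, M (pr i s) (ilast n) = 0)

variable (ε : Fin n → ℝ)

lemma colres_core
    (hMM : M * Mᵀ = 1)
    (hε : ∀ i, ε i = 1 ∨ ε i = -1)
    (hzero : ∀ i j s t, ¬ (f i ⊆ f j) → M (pr i s) (pr j t) = 0)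
    (hR1 : ∀ i j, f i = f j → M (ia i) (ia j) = ε i * ε j * M (ib i) (ib j))
    (hR2 : ∀ i j, f i = f j → M (ib i) (ia j) = -(ε i * ε j * M (ia i) (ib j)))
    (i₀ : Fin n) (IH : ∀ j, f i₀ ⊂ f j → ColRes M f j) : ColRes M f i₀ := by
  classical
  have hMM' : Mᵀ * M = 1 := mul_eq_one_comm.mp hMM
  have he2 : ∀ i j, (ε i * ε j) * (ε i * ε j) = 1 := by
    intro i j
    rcases hε i with h | h <;> rcases hε j with h' | h' <;> rw [h, h'] <;> norm_num
  -- step 1 : rows of the atom of i₀ vanish outside the atom's columns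
  have hrow : ∀ i s j t, f i = f i₀ → f j ≠ f i₀ → M (pr i s) (pr j t) = 0 := by
    intro i s j t hi hj
    by_cases h : f i ⊆ f j
    · have hne : f i ≠ f j := fun hh => hj (hh ▸ hi)
      have hss : f i₀ ⊂ f j := by
        rw [← hi]
        exact h.ssubset_of_ne hne
      have : f i ≠ f j := hne
      exact (IH j hss).1 i s t (by rw [hi]; exact fun hh => hj hh.symm)
    · exact hzero i j s t h
  -- the atom of i₀
  set P : Finset (Fin n) := Finset.univ.filter (fun i => f i = f i₀) with hP
  have memP : ∀ i, i ∈ P ↔ f i = f i₀ := by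
    intro i; simp [hP]
  -- step 2 : restricted row Gram identities
  have grow : ∀ i i' s s', f i = f i₀ → f i' = f i₀ →
      (∑ j ∈ P, ∑ t : Bool, M (pr i s) (pr j t) * M (pr i' s') (pr j t))
        + M (pr i s) (ilast n) * M (pr i' s') (ilast n)
        = if (i, s) = (i', s') then 1 else 0 := by
    intro i i' s s' hi hi'
    have hg := gram_row M hMM (pr i s) (pr i' s')
    rw [← Finset.sum_filter_add_sum_filter_not Finset.univ (fun j => f j = f i₀)
        (fun j => ∑ t : Bool, M (pr i s) (pr j t) * M (pr i' s') (pr j t))] at hg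
    have hz : ∑ j ∈ Finset.univ.filter (fun j => ¬ f j = f i₀),
        ∑ t : Bool, M (pr i s) (pr j t) * M (pr i' s') (pr j t) = 0 := by
      apply Finset.sum_eq_zero
      intro j hj
      rw [Finset.mem_filter] at hj
      apply Finset.sum_eq_zero
      intro t _
      rw [hrow i s j t hi hj.2]
      ring
    rw [hz, add_zero] at hg
    rw [← hP] at hg
    rw [hg]
    congr 1
    rw [pr_eq_iff, Prod.mk.injEq]
  -- step 3 : last column entries of the atom vanish
  have hu : ∀ i s, f i = f i₀ → M (pr i s) (ilast n) = 0 := by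
    intro i s hi
    have key1 : ∀ j ∈ P, ∀ s : Bool,
        (∑ t : Bool, M (pr i s) (pr j t) * M (pr i s) (pr j t))
          = ∑ t : Bool, M (pr i (!s)) (pr j t) * M (pr i (!s)) (pr j t) := by
      intro j hj s
      have hfij : f i = f j := by rw [hi, ((memP j).1 hj)]
      have r1 := hR1 i j hfij
      have r2 := hR2 i j hfij
      have he := he2 i j
      rw [Fintype.sum_bool, Fintype.sum_bool]
      cases s
      · simp only [Bool.not_false, pr_false, pr_true]
        rw [r1, r2]
        linear_combination
          (M (ib i) (ib j) * M (ib i) (ib j) - M (ia i) (ib j) * M (ia i) (ib j)) * he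
      · simp only [Bool.not_true, pr_false, pr_true]
        rw [r1, r2]
        linear_combination
          (M (ia i) (ib j) * M (ia i) (ib j) - M (ib i) (ib j) * M (ib i) (ib j)) * he
    have key2 : ∀ j ∈ P,
        (∑ t : Bool, M (pr i false) (pr j t) * M (pr i true) (pr j t)) = 0 := by
      intro j hj
      have hfij : f i = f j := by rw [hi, ((memP j).1 hj)]
      have r1 := hR1 i j hfij
      have r2 := hR2 i j hfij
      have he := he2 i j
      rw [Fintype.sum_bool]
      simp only [pr_false, pr_true]
      rw [r1, r2]
      linear_combination (-(M (ia i) (ib j) * M (ib i) (ib j))) * he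
    -- the three Gram identities
    have e1 := grow i i false false hi hi
    have e2 := grow i i true true hi hi
    have e3 := grow i i false true hi hi
    simp only [if_pos rfl] at e1 e2
    rw [if_neg (by simp)] at e3
    have hsum12 : (∑ j ∈ P, ∑ t : Bool, M (pr i false) (pr j t) * M (pr i false) (pr j t))
        = ∑ j ∈ P, ∑ t : Bool, M (pr i true) (pr j t) * M (pr i true) (pr j t) := by
      apply Finset.sum_congr rfl
      intro j hj
      simpa using key1 j hj false
    have hsum3 : (∑ j ∈ P, ∑ t : Bool, M (pr i false) (pr j t) * M (pr i true) (pr j t)) = 0 :=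
      Finset.sum_eq_zero key2
    rw [hsum3, zero_add] at e3
    rw [hsum12] at e1
    -- now p² = q², pq = 0
    set p := M (pr i false) (ilast n)
    set q := M (pr i true) (ilast n)
    have hpq : p * q = 0 := e3
    have hps : p * p = q * q := by linarith
    have hp0 : p = 0 ∧ q = 0 := by
      rcases mul_eq_zero.mp hpq with h | h
      · constructor
        · exact h
        · have : q * q = 0 := by rw [← hps, h]; ring
          exact mul_self_eq_zero.mp this
      · constructor
        · have : p * p = 0 := by rw [hps, h]; ring
          exact mul_self_eq_zero.mp this
        · exact h
    cases s
    · exact hp0.1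
    · exact hp0.2
  -- step 4 : the diagonal block is square orthogonal, so its columns are orthonormal too
  have hBTB : ∀ s : Bool,
      (∑ j ∈ P, ∑ u : Bool, M (pr j u) (pr i₀ s) * M (pr j u) (pr i₀ s)) = 1 := by
    have hrfl : f i₀ = f i₀ := rfl
    set B : Matrix ({i : Fin n // f i = f i₀} × Bool) ({i : Fin n // f i = f i₀} × Bool) ℝ :=
      fun x y => M (pr x.1.1 x.2) (pr y.1.1 y.2) with hB
    have key : ∀ (x y : {i : Fin n // f i = f i₀} × Bool),
        (∑ z : {i : Fin n // f i = f i₀} × Bool, M (pr x.1.1 x.2) (pr z.1.1 z.2) * M (pr y.1.1 y.2) (pr z.1.1 z.2))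
          = ∑ j ∈ P, ∑ t : Bool, M (pr x.1.1 x.2) (pr j t) * M (pr y.1.1 y.2) (pr j t) := by
      intro x y
      rw [Fintype.sum_prod_type]
      rw [Finset.sum_subtype P (fun j => memP j)
        (fun j => ∑ t : Bool, M (pr x.1.1 x.2) (pr j t) * M (pr y.1.1 y.2) (pr j t))]
    have hBBT : B * Bᵀ = 1 := by
      ext x y
      obtain ⟨⟨i, hi⟩, s⟩ := x
      obtain ⟨⟨j, hjj⟩, t⟩ := y
      rw [Matrix.mul_apply]
      simp only [Matrix.transpose_apply]; simp only [hB]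
      rw [key (⟨⟨i, hi⟩, s⟩ : {i : Fin n // f i = f i₀} × Bool) ⟨⟨j, hjj⟩, t⟩]
      have hg := grow i j s t hi hjj
      rw [hu i s hi, zero_mul, add_zero] at hg
      rw [hg, Matrix.one_apply]
      by_cases hij : (i, s) = (j, t)
      · rw [Prod.mk.injEq] at hij
        obtain ⟨h1, h2⟩ := hij
        subst h1; subst h2
        rw [if_pos rfl, if_pos rfl]
      · rw [if_neg hij, if_neg]
        intro hh
        cases hh
        exact hij rfl
    have hcomm : Bᵀ * B = 1 := mul_eq_one_comm.mp hBBT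
    intro s
    have h := congrFun (congrFun hcomm (⟨⟨i₀, hrfl⟩, s⟩ : {i : Fin n // f i = f i₀} × Bool))
      ⟨⟨i₀, hrfl⟩, s⟩
    rw [Matrix.mul_apply, Matrix.one_apply_eq] at h
    simp only [Matrix.transpose_apply] at h; simp only [hB] at h
    rw [← h]
    rw [Fintype.sum_prod_type]
    rw [Finset.sum_subtype P (fun j => memP j)
      (fun j => ∑ t : Bool, M (pr j t) (pr i₀ s) * M (pr j t) (pr i₀ s))]
  -- step 5 : conclude
  have hcol0 : ∀ t : Bool,
      (∑ j ∈ Finset.univ.filter (fun j => ¬ f j = f i₀),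
        ∑ u : Bool, M (pr j u) (pr i₀ t) * M (pr j u) (pr i₀ t))
        + M (ilast n) (pr i₀ t) * M (ilast n) (pr i₀ t) = 0 := by
    intro t
    have hg := gram_col M hMM' (pr i₀ t) (pr i₀ t)
    rw [if_pos rfl] at hg
    rw [← Finset.sum_filter_add_sum_filter_not Finset.univ (fun j => f j = f i₀)
      (fun j => ∑ u : Bool, M (pr j u) (pr i₀ t) * M (pr j u) (pr i₀ t))] at hg
    rw [← hP] at hg
    rw [hBTB t] at hg
    linarith
  have inner_nonneg : ∀ t : Bool, ∀ j : Fin n,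
      0 ≤ ∑ u : Bool, M (pr j u) (pr i₀ t) * M (pr j u) (pr i₀ t) := by
    intro t j
    apply Finset.sum_nonneg
    intro u _
    exact mul_self_nonneg _
  have sum_zero : ∀ t : Bool,
      (∑ j ∈ Finset.univ.filter (fun j => ¬ f j = f i₀),
        ∑ u : Bool, M (pr j u) (pr i₀ t) * M (pr j u) (pr i₀ t)) = 0 ∧
      M (ilast n) (pr i₀ t) = 0 := by
    intro t
    have h1 : 0 ≤ ∑ j ∈ Finset.univ.filter (fun j => ¬ f j = f i₀),
        ∑ u : Bool, M (pr j u) (pr i₀ t) * M (pr j u) (pr i₀ t) :=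
      Finset.sum_nonneg (fun j _ => inner_nonneg t j)
    have h2 : 0 ≤ M (ilast n) (pr i₀ t) * M (ilast n) (pr i₀ t) := mul_self_nonneg _
    have h := hcol0 t
    constructor
    · linarith
    · exact mul_self_eq_zero.mp (by linarith)
  refine ⟨?_, ?_, ?_⟩
  · intro j s t hj
    have h0 := (sum_zero t).1
    have hterm : (∑ u : Bool, M (pr j u) (pr i₀ t) * M (pr j u) (pr i₀ t)) = 0 := by
      have := (Finset.sum_eq_zero_iff_of_nonneg (fun j _ => inner_nonneg t j)).mp h0 j
        (by rw [Finset.mem_filter]; exact ⟨Finset.mem_univ j, hj⟩)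
      exact this
    have := (Finset.sum_eq_zero_iff_of_nonneg (fun u _ => mul_self_nonneg _)).mp hterm s
      (Finset.mem_univ s)
    exact mul_self_eq_zero.mp this
  · intro t
    exact (sum_zero t).2
  · intro s
    exact hu i₀ s rfl

lemma colres_all
    (S : Finset (Finset (Fin n × Fin n)))
    (hfS : ∀ i, f i ⊆ S)
    (hMM : M * Mᵀ = 1)
    (hε : ∀ i, ε i = 1 ∨ ε i = -1)
    (hzero : ∀ i j s t, ¬ (f i ⊆ f j) → M (pr i s) (pr j t) = 0)
    (hR1 : ∀ i j, f i = f j → M (ia i) (ia j) = ε i * ε j * M (ib i) (ib j))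
    (hR2 : ∀ i j, f i = f j → M (ib i) (ia j) = -(ε i * ε j * M (ia i) (ib j))) :
    ∀ i, ColRes M f i := by
  suffices H : ∀ k i, S.card ≤ (f i).card + k → ColRes M f i by
    intro i
    exact H S.card i (by omega)
  intro k
  induction k with
  | zero =>
      intro i hi
      apply colres_core M f ε hMM hε hzero hR1 hR2
      intro j hj
      exfalso
      have h1 := Finset.card_lt_card hj
      have h2 := Finset.card_le_card (hfS j)
      omega
  | succ k ihk =>
      intro i hi
      apply colres_core M f ε hMM hε hzero hR1 hR2
      intro j hj
      apply ihk
      have h1 := Finset.card_lt_card hj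
      omega

/-- the `ε`-twisted complex-linearity structure -/
def Good (ε : Fin n → ℝ) (A : Matrix (Fin (2*n+1)) (Fin (2*n+1)) ℝ) : Prop :=
  (∀ i s, A (pr i s) (ilast n) = 0 ∧ A (ilast n) (pr i s) = 0) ∧
  (∀ i j, A (ia i) (ia j) = ε i * ε j * A (ib i) (ib j) ∧
          A (ib i) (ia j) = -(ε i * ε j * A (ia i) (ib j)))

lemma good_structure
    (S : Finset (Finset (Fin n × Fin n)))
    (hfS : ∀ i, f i ⊆ S)
    (hMM : M * Mᵀ = 1)
    (hε : ∀ i, ε i = 1 ∨ ε i = -1)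
    (hzero : ∀ i j s t, ¬ (f i ⊆ f j) → M (pr i s) (pr j t) = 0)
    (hR1 : ∀ i j, f i = f j → M (ia i) (ia j) = ε i * ε j * M (ib i) (ib j))
    (hR2 : ∀ i j, f i = f j → M (ib i) (ia j) = -(ε i * ε j * M (ia i) (ib j))) :
    Good ε M := by
  have hcr := colres_all M f ε S hfS hMM hε hzero hR1 hR2
  constructor
  · intro i s
    exact ⟨(hcr i).2.2 s, (hcr i).2.1 s⟩
  · intro i j
    by_cases h : f i = f j
    · exact ⟨hR1 i j h, hR2 i j h⟩
    · have z : ∀ s t, M (pr i s) (pr j t) = 0 := fun s t => (hcr j).1 i s t h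
      have za : M (ia i) (ia j) = 0 := z false false
      have zb : M (ia i) (ib j) = 0 := z false true
      have zc : M (ib i) (ia j) = 0 := z true false
      have zd : M (ib i) (ib j) = 0 := z true true
      rw [za, zb, zc, zd]
      constructor <;> ring

noncomputable def toC (ε : Fin n → ℝ) (A : Matrix (Fin (2*n+1)) (Fin (2*n+1)) ℝ) :
    Matrix (Fin n) (Fin n) ℂ :=
  fun i j => ⟨A (ia i) (ia j), ε i * A (ib i) (ia j)⟩

lemma mul_pair (A B : Matrix (Fin (2*n+1)) (Fin (2*n+1)) ℝ) (x y : Fin (2*n+1)) :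
    (A * B) x y = (∑ k : Fin n, ∑ u : Bool, A x (pr k u) * B (pr k u) y)
      + A x (ilast n) * B (ilast n) y := by
  rw [Matrix.mul_apply, sum_split (fun z => A x z * B z y)]

variable {ε : Fin n → ℝ}

lemma ia_ne_ib (i j : Fin n) : (ia i : Fin (2*n+1)) ≠ ib j := by
  rw [← pr_false, ← pr_true]
  intro h
  exact absurd (pr_inj h).2 (by simp)

lemma ia_eq_iff {i j : Fin n} : (ia i : Fin (2*n+1)) = ia j ↔ i = j := by
  rw [← pr_false (i := i), ← pr_false (i := j), pr_eq_iff]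
  simp

lemma ib_eq_iff {i j : Fin n} : (ib i : Fin (2*n+1)) = ib j ↔ i = j := by
  rw [← pr_true (i := i), ← pr_true (i := j), pr_eq_iff]
  simp

lemma good_one (hε : ∀ i, ε i = 1 ∨ ε i = -1) :
    Good ε (1 : Matrix (Fin (2*n+1)) (Fin (2*n+1)) ℝ) := by
  constructor
  · intro i s
    have h1 := pr_ne_ilast i s
    exact ⟨Matrix.one_apply_ne h1, Matrix.one_apply_ne (Ne.symm h1)⟩
  · intro i j
    have hab : (ia i : Fin (2*n+1)) ≠ ib j := ia_ne_ib i j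
    have hba : (ib i : Fin (2*n+1)) ≠ ia j := Ne.symm (ia_ne_ib j i)
    rw [Matrix.one_apply_ne hab, Matrix.one_apply_ne hba]
    refine ⟨?_, by ring⟩
    by_cases h : i = j
    · subst h
      rw [Matrix.one_apply_eq, Matrix.one_apply_eq]
      rcases hε i with h' | h' <;> rw [h'] <;> norm_num
    · rw [Matrix.one_apply_ne (fun hh => h (ia_eq_iff.mp hh)),
        Matrix.one_apply_ne (fun hh => h (ib_eq_iff.mp hh))]
      ring

lemma toC_one : toC ε (1 : Matrix (Fin (2*n+1)) (Fin (2*n+1)) ℝ) = 1 := by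
  ext i j
  have hba : (ib i : Fin (2*n+1)) ≠ ia j := Ne.symm (ia_ne_ib j i)
  by_cases h : i = j
  · subst h
    simp [toC, Matrix.one_apply_eq, Matrix.one_apply_ne hba, Complex.ext_iff]
  · have h1 : (ia i : Fin (2*n+1)) ≠ ia j := fun hh => h (ia_eq_iff.mp hh)
    simp [toC, Matrix.one_apply_ne h1, Matrix.one_apply_ne hba, Matrix.one_apply_ne h,
      Complex.ext_iff]

lemma good_mul {A B : Matrix (Fin (2*n+1)) (Fin (2*n+1)) ℝ}
    (hε : ∀ i, ε i = 1 ∨ ε i = -1) (hA : Good ε A) (hB : Good ε B) :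
    Good ε (A * B) := by
  constructor
  · intro i s
    constructor
    · rw [mul_pair, (hA.1 i s).1, zero_mul, add_zero]
      apply Finset.sum_eq_zero; intro k _
      apply Finset.sum_eq_zero; intro u _
      rw [(hB.1 k u).1, mul_zero]
    · rw [mul_pair, (hB.1 i s).2, mul_zero, add_zero]
      apply Finset.sum_eq_zero; intro k _
      apply Finset.sum_eq_zero; intro u _
      rw [(hA.1 k u).2, zero_mul]
  · intro i j
    have hA0a : A (ia i) (ilast n) = 0 := (hA.1 i false).1
    have hA0b : A (ib i) (ilast n) = 0 := (hA.1 i true).1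
    have hB0a : B (ilast n) (ia j) = 0 := (hB.1 j false).2
    have hB0b : B (ilast n) (ib j) = 0 := (hB.1 j true).2
    constructor
    · rw [mul_pair, mul_pair, hA0a, hA0b, zero_mul, zero_mul, add_zero, add_zero,
        Finset.mul_sum]
      apply Finset.sum_congr rfl
      intro k _
      rw [Fintype.sum_bool, Fintype.sum_bool]
      simp only [pr_false, pr_true]
      have a1 := (hA.2 i k).1
      have a2 := (hA.2 i k).2
      have b1 := (hB.2 k j).1
      have b2 := (hB.2 k j).2
      rcases hε i with hi' | hi' <;> rcases hε j with hj' | hj' <;> rcases hε k with hk' | hk' <;>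
        rw [hi', hk'] at a1 a2 <;> rw [hk', hj'] at b1 b2 <;> rw [hi', hj'] <;>
        rw [a1, a2, b1, b2] <;> ring
    · rw [mul_pair, mul_pair, hA0a, hA0b, zero_mul, zero_mul, add_zero, add_zero,
        Finset.mul_sum]
      rw [← Finset.sum_neg_distrib]
      apply Finset.sum_congr rfl
      intro k _
      rw [Fintype.sum_bool, Fintype.sum_bool]
      simp only [pr_false, pr_true]
      have a1 := (hA.2 i k).1
      have a2 := (hA.2 i k).2
      have b1 := (hB.2 k j).1
      have b2 := (hB.2 k j).2
      rcases hε i with hi' | hi' <;> rcases hε j with hj' | hj' <;> rcases hε k with hk' | hk' <;>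
        rw [hi', hk'] at a1 a2 <;> rw [hk', hj'] at b1 b2 <;> rw [hi', hj'] <;>
        rw [a1, a2, b1, b2] <;> ring

lemma toC_mul {A B : Matrix (Fin (2*n+1)) (Fin (2*n+1)) ℝ}
    (hε : ∀ i, ε i = 1 ∨ ε i = -1) (hA : Good ε A) (hB : Good ε B) :
    toC ε (A * B) = toC ε A * toC ε B := by
  ext i j
  rw [Matrix.mul_apply]
  have hA0a : A (ia i) (ilast n) = 0 := (hA.1 i false).1
  have hA0b : A (ib i) (ilast n) = 0 := (hA.1 i true).1
  have hB0a : B (ilast n) (ia j) = 0 := (hB.1 j false).2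
  apply Complex.ext
  · show (A * B) (ia i) (ia j) = _
    rw [Complex.re_sum]
    rw [mul_pair, hA0a, zero_mul, add_zero]
    apply Finset.sum_congr rfl
    intro k _
    rw [Fintype.sum_bool]
    simp only [pr_false, pr_true]
    simp only [toC, Complex.mul_re]
    have a2 := (hA.2 i k).2
    rcases hε i with hi' | hi' <;> rcases hε k with hk' | hk' <;>
      rw [hi', hk'] at a2 ⊢ <;> rw [a2] <;> ring
  · show ε i * (A * B) (ib i) (ia j) = _
    rw [Complex.im_sum]
    rw [mul_pair, hA0b, zero_mul, add_zero, Finset.mul_sum]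
    apply Finset.sum_congr rfl
    intro k _
    rw [Fintype.sum_bool]
    simp only [pr_false, pr_true]
    simp only [toC, Complex.mul_im]
    have a1 := (hA.2 i k).1
    rcases hε i with hi' | hi' <;> rcases hε k with hk' | hk' <;>
      rw [hi', hk'] at a1 ⊢ <;> rw [a1] <;> ring

lemma good_transpose {A : Matrix (Fin (2*n+1)) (Fin (2*n+1)) ℝ}
    (hε : ∀ i, ε i = 1 ∨ ε i = -1) (hA : Good ε A) : Good ε Aᵀ := by
  constructor
  · intro i s
    refine ⟨?_, ?_⟩
    · show A (ilast n) (pr i s) = 0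
      exact (hA.1 i s).2
    · show A (pr i s) (ilast n) = 0
      exact (hA.1 i s).1
  · intro i j
    have r1 := (hA.2 j i).1
    have r2 := (hA.2 j i).2
    constructor
    · show A (ia j) (ia i) = ε i * ε j * A (ib j) (ib i)
      rw [r1]; ring
    · show A (ia j) (ib i) = -(ε i * ε j * A (ib j) (ia i))
      rcases hε i with hi' | hi' <;> rcases hε j with hj' | hj' <;>
        rw [hi', hj'] at r2 ⊢ <;> rw [r2] <;> ring

section Torus
variable (θ : Fin n → ℝ)

lemma tm_aa (i j : Fin n) :
    torusMat n θ (ia i) (ia j) = if i = j then Real.cos (θ i) else 0 := by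
  have hi := i.isLt; have hj := j.isLt
  simp only [torusMat, Matrix.of_apply, ia]
  rw [dif_pos (by omega : 2*i.val < 2*n), if_pos (by omega : 2*j.val < 2*n)]
  by_cases h : i = j
  · subst h
    rw [if_pos rfl, if_pos (by omega), if_pos (by omega), if_pos rfl]
    simp only [show 2 * i.val / 2 = i.val from by omega, Fin.eta]
  · rw [if_neg (fun hh => h (Fin.ext (by omega : i.val = j.val))), if_neg h]

lemma tm_ba (i j : Fin n) :
    torusMat n θ (ib i) (ia j) = if i = j then Real.sin (θ i) else 0 := by
  have hi := i.isLt; have hj := j.isLt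
  simp only [torusMat, Matrix.of_apply, ib, ia]
  rw [dif_pos (by omega : 2*i.val+1 < 2*n), if_pos (by omega : 2*j.val < 2*n)]
  by_cases h : i = j
  · subst h
    rw [if_pos (by omega), if_neg (by omega), if_pos (by omega), if_pos rfl]
    simp only [show (2 * i.val + 1) / 2 = i.val from by omega, Fin.eta]
  · rw [if_neg (fun hh => h (Fin.ext (by omega : i.val = j.val))), if_neg h]

lemma toC_tm (hε : ∀ i, ε i = 1 ∨ ε i = -1) :
    toC ε (torusMat n θ) =
      Matrix.diagonal (fun i => Complex.exp ((ε i * θ i : ℝ) * Complex.I)) := by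
  ext i j
  simp only [toC, Matrix.diagonal_apply]
  by_cases h : i = j
  · subst h
    rw [if_pos rfl, tm_aa, tm_ba, if_pos rfl, if_pos rfl, Complex.exp_mul_I,
      ← Complex.ofReal_cos, ← Complex.ofReal_sin]
    rcases hε i with h | h <;> rw [h] <;>
      simp [Complex.ext_iff, Real.cos_neg, Real.sin_neg, Complex.cos_ofReal_re, Complex.sin_ofReal_re]
  · rw [if_neg h, tm_aa, tm_ba, if_neg h, if_neg h]
    simp [Complex.ext_iff]

end Torus

end St6

open St6

theorem stmt6 (n g : ℕ) (hn : 2 ≤ n) (hg : 2 ≤ g)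
    (C : Finset (Fin n × Fin n)) (hC : C = ∅ ∨ IsBlockFin n C)
    (D : Fin (2*g) → Finset (Fin n × Fin n)) (hD : ∀ l, IsUnionOfBlocksFin n (D l))
    (M : Fin (2*g) → Matrix (Fin (2*n+1)) (Fin (2*n+1)) ℝ)
    (hSO : ∀ l, SOodd n (M l))
    (hblock : ∀ l (i j : Fin n),
      ((i, j) ∈ D l →
        M l (ia i) (ia j) = 0 ∧ M l (ia i) (ib j) = 0 ∧
        M l (ib i) (ia j) = 0 ∧ M l (ib i) (ib j) = 0) ∧
      ((i, j) ∉ D l ∪ (D l).image Prod.swap → (i, j) ∈ C ∪ C.image Prod.swap →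
        M l (ia i) (ia j) = -(M l (ib i) (ib j)) ∧ M l (ib i) (ia j) = M l (ia i) (ib j)) ∧
      ((i, j) ∉ D l ∪ (D l).image Prod.swap → (i, j) ∉ C ∪ C.image Prod.swap →
        M l (ia i) (ia j) = M l (ib i) (ib j) ∧ M l (ib i) (ia j) = -(M l (ia i) (ib j))))
    (θ : Fin n → ℝ) (hgen : IsGeneric n θ) :
    ((List.finRange g).map (fun l =>
        commMat n (M ⟨l.val, by have := l.isLt; omega⟩)
                  (M ⟨g + l.val, by have := l.isLt; omega⟩))).prod
      ≠ torusMat n θ := by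

  classical
  intro hEq
  -- construct the sign vector ε from C
  obtain ⟨ε, hε, hCin, hCout⟩ :
      ∃ ε : Fin n → ℝ, (∀ i, ε i = 1 ∨ ε i = -1) ∧
        (∀ i j, (i, j) ∈ C ∪ C.image Prod.swap → ε i * ε j = -1) ∧
        (∀ i j, (i, j) ∉ C ∪ C.image Prod.swap → ε i * ε j = 1) := by
    rcases hC with hC0 | ⟨V, hVne, hVu, hCV⟩
    · refine ⟨fun _ => 1, fun i => Or.inl rfl, ?_, ?_⟩
      · intro i j hmem
        rw [hC0] at hmem
        simp at hmem
      · intro i j _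
        norm_num
    · have hmem_iff : ∀ i j : Fin n, ((i, j) ∈ C ∪ C.image Prod.swap) ↔
          ((i ∈ V ∧ j ∉ V) ∨ (j ∈ V ∧ i ∉ V)) := by
        intro i j
        rw [hCV]
        constructor
        · intro h
          rcases Finset.mem_union.mp h with h | h
          · have := Finset.mem_product.mp h
            exact Or.inl ⟨this.1, Finset.mem_compl.mp this.2⟩
          · obtain ⟨p, hp, hps⟩ := Finset.mem_image.mp h
            have hpji : p = (j, i) := by
              have := congrArg Prod.swap hps
              rwa [Prod.swap_swap] at this
            rw [hpji] at hp
            have := Finset.mem_product.mp hp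
            exact Or.inr ⟨this.1, Finset.mem_compl.mp this.2⟩
        · intro h
          rcases h with ⟨h1, h2⟩ | ⟨h1, h2⟩
          · exact Finset.mem_union_left _
              (Finset.mem_product.mpr ⟨h1, Finset.mem_compl.mpr h2⟩)
          · apply Finset.mem_union_right
            apply Finset.mem_image.mpr
            exact ⟨(j, i), Finset.mem_product.mpr ⟨h1, Finset.mem_compl.mpr h2⟩, rfl⟩
      refine ⟨fun i => if i ∈ V then -1 else 1,
        fun i => by by_cases h : i ∈ V <;> simp [h], ?_, ?_⟩
      · intro i j hmem
        rcases (hmem_iff i j).mp hmem with ⟨h1, h2⟩ | ⟨h1, h2⟩ <;> simp [h1, h2]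
      · intro i j hmem
        rw [hmem_iff] at hmem
        push_neg at hmem
        by_cases h1 : i ∈ V <;> by_cases h2 : j ∈ V <;> simp [h1, h2] <;> tauto
  -- set up the block-pattern functions
  choose S hSb hSsup using hD
  set f : Fin (2*g) → Fin n → Finset (Finset (Fin n × Fin n)) :=
    fun l i => (S l).filter (fun b => ∃ j : Fin n, (i, j) ∈ b) with hf
  have hfS : ∀ l i, f l i ⊆ S l := fun l i => Finset.filter_subset _ _
  have memD_of_not_subset : ∀ l i j, ¬ (f l i ⊆ f l j) → (i, j) ∈ D l := by
    intro l i j h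
    obtain ⟨b, hbi, hbj⟩ := Finset.not_subset.mp h
    simp only [hf, Finset.mem_filter] at hbi hbj
    obtain ⟨hbS, j', hj'⟩ := hbi
    obtain ⟨V, hVne, hVu, rfl⟩ := hSb l b hbS
    have hiV : i ∈ V := (Finset.mem_product.mp hj').1
    have hjV : j ∉ V := by
      intro hjV
      apply hbj
      refine ⟨hbS, ?_⟩
      obtain ⟨x, hx⟩ : ∃ x, x ∉ V := by
        by_contra hall
        push_neg at hall
        exact hVu (Finset.eq_univ_iff_forall.mpr hall)
      exact ⟨x, Finset.mem_product.mpr ⟨hjV, Finset.mem_compl.mpr hx⟩⟩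
    rw [hSsup l, Finset.mem_sup]
    exact ⟨_, hbS, Finset.mem_product.mpr ⟨hiV, Finset.mem_compl.mpr hjV⟩⟩
  have main_notsub : ∀ l (i' j' : Fin n), (i', j') ∈ D l → ¬ (f l i' ⊆ f l j') := by
    intro l i' j' hd hsub
    rw [hSsup l, Finset.mem_sup] at hd
    obtain ⟨b, hbS, hbmem⟩ := hd
    obtain ⟨V, hVne, hVu, rfl⟩ := hSb l b hbS
    have h1 := Finset.mem_product.mp hbmem
    have hin : (V ×ˢ Vᶜ) ∈ f l i' := by
      simp only [hf, Finset.mem_filter]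
      exact ⟨hbS, ⟨j', hbmem⟩⟩
    have hin2 := hsub hin
    simp only [hf, Finset.mem_filter] at hin2
    obtain ⟨_, x, hx⟩ := hin2
    have := (Finset.mem_product.mp hx).1
    exact (Finset.mem_compl.mp h1.2) this
  have notD_of_eq : ∀ l i j, f l i = f l j → (i, j) ∉ D l ∪ (D l).image Prod.swap := by
    intro l i j hfij hmem
    rcases Finset.mem_union.mp hmem with h | h
    · exact main_notsub l i j h (le_of_eq hfij)
    · obtain ⟨p, hp, hps⟩ := Finset.mem_image.mp h
      have hpji : p = (j, i) := by
        have := congrArg Prod.swap hps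
        rwa [Prod.swap_swap] at this
      rw [hpji] at hp
      exact main_notsub l j i hp (le_of_eq hfij.symm)
  -- each M l has the ε-twisted complex structure
  have hGood : ∀ l, Good ε (M l) := by
    intro l
    apply St6.good_structure (M l) (f l) ε (S l) (hfS l) (hSO l).1 hε
    · intro i j s t hns
      have h4 := (hblock l i j).1 (memD_of_not_subset l i j hns)
      cases s <;> cases t <;> simp only [pr_false, pr_true] <;> tauto
    · intro i j hfij
      have hnot := notD_of_eq l i j hfij
      by_cases hc : (i, j) ∈ C ∪ C.image Prod.swap
      · rw [((hblock l i j).2.1 hnot hc).1, hCin i j hc]; ring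
      · rw [((hblock l i j).2.2 hnot hc).1, hCout i j hc]; ring
    · intro i j hfij
      have hnot := notD_of_eq l i j hfij
      by_cases hc : (i, j) ∈ C ∪ C.image Prod.swap
      · rw [((hblock l i j).2.1 hnot hc).2, hCin i j hc]; ring
      · rw [((hblock l i j).2.2 hnot hc).2, hCout i j hc]; ring
  -- commutators are Good with toC-determinant 1
  have hinv : ∀ l, (M l)⁻¹ = (M l)ᵀ := fun l => Matrix.inv_eq_right_inv (hSO l).1
  have hdetMl : ∀ l, (toC ε (M l)).det * (toC ε ((M l)ᵀ)).det = 1 := by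
    intro l
    rw [← Matrix.det_mul, ← toC_mul hε (hGood l) (good_transpose hε (hGood l)), (hSO l).1,
      toC_one, Matrix.det_one]
  have hGoodComm : ∀ a b : Fin (2*g), Good ε (commMat n (M a) (M b)) := by
    intro a b
    rw [commMat, hinv a, hinv b]
    exact good_mul hε (good_mul hε (good_mul hε (hGood a) (hGood b))
      (good_transpose hε (hGood a))) (good_transpose hε (hGood b))
  have hdetComm : ∀ a b : Fin (2*g), (toC ε (commMat n (M a) (M b))).det = 1 := by
    intro a b
    rw [commMat, hinv a, hinv b,
      toC_mul hε (good_mul hε (good_mul hε (hGood a) (hGood b)) (good_transpose hε (hGood a)))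
        (good_transpose hε (hGood b)),
      toC_mul hε (good_mul hε (hGood a) (hGood b)) (good_transpose hε (hGood a)),
      toC_mul hε (hGood a) (hGood b),
      Matrix.det_mul, Matrix.det_mul, Matrix.det_mul]
    have ha := hdetMl a
    have hb := hdetMl b
    calc (toC ε (M a)).det * (toC ε (M b)).det * (toC ε ((M a)ᵀ)).det * (toC ε ((M b)ᵀ)).det
        = ((toC ε (M a)).det * (toC ε ((M a)ᵀ)).det)
          * ((toC ε (M b)).det * (toC ε ((M b)ᵀ)).det) := by ring
      _ = 1 := by rw [ha, hb, one_mul]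
  -- products of such matrices
  have hlist : ∀ L : List (Matrix (Fin (2*n+1)) (Fin (2*n+1)) ℝ),
      (∀ A ∈ L, Good ε A ∧ (toC ε A).det = 1) →
      Good ε L.prod ∧ (toC ε L.prod).det = 1 := by
    intro L
    induction L with
    | nil =>
        intro _
        rw [List.prod_nil]
        exact ⟨good_one hε, by rw [toC_one, Matrix.det_one]⟩
    | cons A L ih =>
        intro h
        have hA := h A (List.mem_cons_self)
        have hL := ih (fun B hB => h B (List.mem_cons_of_mem A hB))
        rw [List.prod_cons]
        exact ⟨good_mul hε hA.1 hL.1,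
          by rw [toC_mul hε hA.1 hL.1, Matrix.det_mul, hA.2, hL.2, one_mul]⟩
  have hmain := hlist ((List.finRange g).map (fun l =>
        commMat n (M ⟨l.val, by have := l.isLt; omega⟩)
                  (M ⟨g + l.val, by have := l.isLt; omega⟩))) (by
    intro A hA
    rw [List.mem_map] at hA
    obtain ⟨l, _, rfl⟩ := hA
    exact ⟨hGoodComm _ _, hdetComm _ _⟩)
  rw [hEq] at hmain
  have hdet1 : (toC ε (torusMat n θ)).det = 1 := hmain.2
  rw [toC_tm θ hε, Matrix.det_diagonal, ← Complex.exp_sum, Complex.exp_eq_one_iff] at hdet1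
  obtain ⟨k, hk⟩ := hdet1
  have h1 : (∑ i : Fin n, ((ε i * θ i : ℝ) : ℂ) * Complex.I)
      = ((∑ i, (ε i * θ i) : ℝ) : ℂ) * Complex.I := by
    rw [← Finset.sum_mul]
    norm_cast
  rw [h1] at hk
  have h2 : ((∑ i, (ε i * θ i) : ℝ) : ℂ) = ((2 * Real.pi * (k : ℝ) : ℝ) : ℂ) := by
    apply mul_right_cancel₀ Complex.I_ne_zero
    rw [hk]
    push_cast
    ring
  have hsum : (∑ i, (ε i * θ i)) = 2 * Real.pi * (k : ℝ) := by exact_mod_cast h2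
  set lam : Fin n → ℤ := fun i => if ε i = 1 then 1 else -1 with hlam
  have h01 : ∀ i, lam i = -1 ∨ lam i = 0 ∨ lam i = 1 := by
    intro i
    rcases hε i with h | h
    · right; right; norm_num [hlam, h]
    · left; norm_num [hlam, h]
  have hcast : ∀ i, (lam i : ℝ) = ε i := by
    intro i
    rcases hε i with h | h <;> norm_num [hlam, h]
  have hlz := hgen.2 lam h01 ⟨k, by
    rw [show (∑ i, (lam i : ℝ) * θ i) = ∑ i, ε i * θ i from
      Finset.sum_congr rfl (fun i _ => by rw [hcast])]
    exact hsum⟩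
  have hfin := hlz ⟨0, by omega⟩
  rcases hε ⟨0, by omega⟩ with h | h <;> norm_num [hlam, h] at hfin
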